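/- Fix γ real with |γ| < π/2, 0 ≤ β < 1, λ with |λ| = 1, and z₀ ∈ D. If P is analytic on D with P(0)=1, Re(e^{iγ}P(z)) > β cos γ in D, and P'(0) = 2(1-β)e^{-iγ}λ cos γ, then ∫_0^{z₀} P(ζ)dζ = z₀ - 2(1-β)e^{-iγ}(cos γ)(z₀ + (1/λ)log(1-λz₀)), where log is the principal branch. -/

import Mathlib

open Complex Metric Set

theorem stmt_16 (γ β : ℝ) (hγ : |γ| < Real.pi / 2) (hβ0 : 0 ≤ β) (hβ1 : β < 1)
    (lam : ℂ) (hlam : ‖lam‖ = 1) (z₀ : ℂ) (hz₀ : z₀ ∈ ball (0:ℂ) 1)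
    (P : ℂ → ℂ) (hP : DifferentiableOn ℂ P (ball (0:ℂ) 1)) (hP0 : P 0 = 1)
    (hre : ∀ z ∈ ball (0:ℂ) 1, β * Real.cos γ < (Complex.exp (γ * Complex.I) * P z).re)
    (hP'0 : deriv P 0 = 2 * (1 - β) * Complex.exp (-(γ * Complex.I)) * lam * Real.cos γ) :
    ∫ t in (0:ℝ)..1, z₀ * P ((t : ℂ) * z₀) =
      z₀ - 2 * (1 - β) * Complex.exp (-(γ * Complex.I)) * Real.cos γ *
        (z₀ + (1 / lam) * Complex.log (1 - lam * z₀)) := by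
  have hγ' := abs_lt.mp hγ
  have hcγ : 0 < Real.cos γ := Real.cos_pos_of_mem_Ioo ⟨by linarith [hγ'.1], hγ'.2⟩
  set d : ℝ := (1 - β) * Real.cos γ with hd_def
  have hd : 0 < d := mul_pos (by linarith) hcγ
  have hdC : (d : ℂ) ≠ 0 := by
    simpa using ne_of_gt hd
  have hE : Complex.exp (γ * Complex.I) = (Real.cos γ : ℂ) + (Real.sin γ : ℂ) * Complex.I := by
    rw [Complex.exp_mul_I]
    push_cast [Complex.ofReal_cos, Complex.ofReal_sin]
    ring
  have hEinv : Complex.exp (γ * Complex.I) * Complex.exp (-(γ * Complex.I)) = 1 := by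
    rw [← Complex.exp_add]; ring_nf; exact Complex.exp_zero
  -- the auxiliary function N and its properties
  set N : ℂ → ℂ := fun z =>
    Complex.exp (γ * Complex.I) * P z - (Real.sin γ : ℂ) * Complex.I - (β : ℂ) * (Real.cos γ : ℂ)
    with hN_def
  have hNre : ∀ z ∈ ball (0:ℂ) 1, 0 < (N z).re := by
    intro z hz
    have h := hre z hz
    have hre2 : (N z).re = (Complex.exp (γ * Complex.I) * P z).re - β * Real.cos γ := by
      simp only [hN_def, Complex.sub_re, Complex.mul_I_re, Complex.ofReal_im, neg_zero, sub_zero,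
        ← Complex.ofReal_mul, Complex.ofReal_re]
    rw [hre2]
    linarith
  have hN0 : N 0 = (d : ℂ) := by
    simp only [hN_def, hP0, mul_one, hd_def]
    rw [Complex.exp_mul_I]
    push_cast
    ring
  have hNden : ∀ z ∈ ball (0:ℂ) 1, N z + d ≠ 0 := by
    intro z hz h
    have h1 : (N z + (d:ℂ)).re = 0 := by rw [h]; simp
    have h2 : (N z).re + d = 0 := by simpa using h1
    have := hNre z hz
    linarith
  -- the Schwarz function ω
  set ω : ℂ → ℂ := fun z => (N z - d) / (N z + d) with hω_def
  have hNdiff : DifferentiableOn ℂ N (ball (0:ℂ) 1) := by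
    apply DifferentiableOn.sub_const
    exact ((hP.const_mul _).sub_const _)
  have hωdiff : DifferentiableOn ℂ ω (ball (0:ℂ) 1) :=
    (hNdiff.sub_const _).div (hNdiff.add_const _) hNden
  have hω0 : ω 0 = 0 := by
    simp [hω_def, hN0]
  have hωmaps : MapsTo ω (ball (0:ℂ) 1) (ball (ω 0) 1) := by
    intro z hz
    rw [hω0, mem_ball_zero_iff]
    have hden := hNden z hz
    rw [norm_div, div_lt_one (norm_pos_iff.mpr hden)]
    have h1 : Complex.normSq (N z - d) < Complex.normSq (N z + d) := by
      have hx := hNre z hz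
      simp only [Complex.normSq_apply, Complex.sub_re, Complex.sub_im, Complex.add_re,
        Complex.add_im, Complex.ofReal_re, Complex.ofReal_im]
      nlinarith
    have := Real.sqrt_lt_sqrt (Complex.normSq_nonneg _) h1
    simpa [Complex.norm_def] using this
  -- derivative of ω at 0
  have hP0' : HasDerivAt P (deriv P 0) 0 :=
    (hP.differentiableAt (isOpen_ball.mem_nhds (mem_ball_self one_pos))).hasDerivAt
  have hN' : HasDerivAt N (2 * d * lam) 0 := by
    have h1 : HasDerivAt N (Complex.exp (γ * Complex.I) * deriv P 0) 0 :=
      ((hP0'.const_mul _).sub_const _).sub_const _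
    convert h1 using 1
    rw [hP'0, hd_def]
    push_cast
    linear_combination (-(2 * (1 - (β:ℂ)) * lam * Complex.cos (γ:ℂ))) * hEinv
  have hω' : HasDerivAt ω lam 0 := by
    have hden : N 0 + (d:ℂ) ≠ 0 := hNden 0 (mem_ball_self one_pos)
    have h1 : HasDerivAt ω ((2 * d * lam * (N 0 + d) - (N 0 - d) * (2 * d * lam)) / (N 0 + d)^2) 0 :=
      (hN'.sub_const _).div (hN'.add_const _) hden
    convert h1 using 1
    rw [hN0]
    have h2d : (d:ℂ) + (d:ℂ) ≠ 0 := by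
      intro h; apply hdC; linear_combination h/2
    field_simp
    ring
  -- Schwarz rigidity: ω z = lam * z
  have hωz : ∀ z ∈ ball (0:ℂ) 1, ω z = lam * z := by
    have heq : ‖dslope ω 0 0‖ = 1 / 1 := by
      rw [dslope_same, hω'.deriv]
      simpa using hlam
    have := affine_of_mapsTo_ball_of_exists_norm_dslope_eq_div hωdiff (hωmaps.mono_right ball_subset_closedBall)
      (mem_ball_self one_pos) heq
    intro z hz
    have h2 := this hz
    rw [dslope_same, hω'.deriv] at h2
    simpa [hω0, mul_comm] using h2
  -- recover P
  set K : ℂ := 2 * (1 - β) * Complex.exp (-(γ * Complex.I)) * Real.cos γ with hK_def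
  have hEK : Complex.exp (γ * Complex.I) * K = 2 * d := by
    rw [hK_def, hd_def]
    push_cast
    linear_combination (2 * (1 - (β:ℂ)) * Complex.cos (γ:ℂ)) * hEinv
  have hPform : ∀ z ∈ ball (0:ℂ) 1, P z = 1 + K * (lam * z) / (1 - lam * z) := by
    intro z hz
    have h1z : 1 - lam * z ≠ 0 := by
      intro h
      have : ‖lam * z‖ < 1 := by
        rw [norm_mul, hlam, one_mul]
        simpa using hz
      rw [sub_eq_zero] at h
      rw [← h] at this
      simp at this
    have hden := hNden z hz
    have hωeq := hωz z hz
    rw [hω_def] at hωeq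
    have hNz : N z * (1 - lam * z) = d * (1 + lam * z) := by
      have := (div_eq_iff hden).mp hωeq
      linear_combination this
    -- N z = E * P z - i sin - β cos
    have hEP : Complex.exp (γ * Complex.I) * P z
        = N z + (Real.sin γ : ℂ) * Complex.I + (β : ℂ) * (Real.cos γ : ℂ) := by
      rw [hN_def]; ring
    have key : Complex.exp (γ * Complex.I) * P z * (1 - lam * z)
        = Complex.exp (γ * Complex.I) * (1 - lam * z) + 2 * d * (lam * z) := by
      rw [hd_def] at hNz
      push_cast at hNz
      rw [hEP, Complex.exp_mul_I, hd_def]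
      push_cast
      linear_combination hNz
    have hKd : K = 2 * (d:ℂ) * Complex.exp (-(γ * Complex.I)) := by
      rw [hK_def, hd_def]; push_cast; ring
    have hmul : P z * (1 - lam * z)
        = (1 - lam * z) + 2 * (d:ℂ) * Complex.exp (-(γ * Complex.I)) * (lam * z) := by
      linear_combination Complex.exp (-(γ * Complex.I)) * key
        + ((1 - lam * z) - P z * (1 - lam * z)) * hEinv
    rw [hKd]
    field_simp
    linear_combination hmul
  -- the integrand on [0,1]
  have habs0 : ‖z₀‖ < 1 := by simpa using hz₀
  have h1t : ∀ t : ℝ, t ∈ Set.uIcc (0:ℝ) 1 → (1 - lam * z₀ * t ≠ 0 ∧ 0 < (1 - lam * z₀ * t).re) := by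
    intro t ht
    rw [Set.uIcc_of_le zero_le_one] at ht
    have h1 : ‖lam * z₀ * t‖ < 1 := by
      rw [norm_mul, norm_mul, hlam, one_mul, Complex.norm_real, Real.norm_eq_abs, _root_.abs_of_nonneg ht.1]
      nlinarith [norm_nonneg z₀, ht.2]
    have h2 : (lam * z₀ * t).re < 1 := lt_of_le_of_lt (Complex.re_le_norm _) h1
    constructor
    · intro h
      rw [sub_eq_zero] at h
      rw [← h] at h1
      simp at h1
    · simp only [Complex.sub_re, Complex.one_re]
      linarith
  have hint : ∀ t ∈ Set.uIcc (0:ℝ) 1,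
      z₀ * P ((t : ℂ) * z₀) = (z₀ - K * z₀) + K * z₀ * (1 - lam * z₀ * t)⁻¹ := by
    intro t ht
    have ht' := ht
    rw [Set.uIcc_of_le zero_le_one] at ht'
    have hmem : (t : ℂ) * z₀ ∈ ball (0:ℂ) 1 := by
      rw [mem_ball_zero_iff]
      have : ‖(t:ℂ) * z₀‖ = t * ‖z₀‖ := by
        rw [norm_mul, Complex.norm_real, Real.norm_eq_abs, _root_.abs_of_nonneg ht'.1]
      rw [this]
      nlinarith [norm_nonneg z₀, ht'.2]
    rw [hPform _ hmem]
    have hne := (h1t t ht).1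
    have hne' : 1 - z₀ * lam * (t:ℂ) ≠ 0 := by rwa [show z₀ * lam = lam * z₀ from mul_comm _ _]
    rw [show lam * ((t:ℂ) * z₀) = lam * z₀ * (t:ℂ) from by ring]
    field_simp [hne, hne']
    ring
  rw [intervalIntegral.integral_congr hint]
  -- antiderivative
  have hlam0 : lam ≠ 0 := by
    intro h; rw [h] at hlam; simp at hlam
  set F : ℝ → ℂ := fun t =>
    (z₀ - K * z₀) * t - (K / lam) * Complex.log (1 - lam * z₀ * t) with hF_def
  have hFderiv : ∀ t ∈ Set.uIcc (0:ℝ) 1,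
      HasDerivAt F ((z₀ - K * z₀) + K * z₀ * (1 - lam * z₀ * t)⁻¹) t := by
    intro t ht
    obtain ⟨hne, hpos⟩ := h1t t ht
    have hg : HasDerivAt (fun t : ℝ => 1 - lam * z₀ * (t:ℂ)) (-(lam * z₀)) t := by
      have h1 : HasDerivAt (fun t : ℝ => (t:ℂ)) 1 t := Complex.ofRealCLM.hasDerivAt
      simpa using ((h1.const_mul (lam * z₀)).const_sub 1)
    have hslit : 1 - lam * z₀ * (t:ℝ) ∈ Complex.slitPlane := Or.inl hpos
    have hlog : HasDerivAt (fun t : ℝ => Complex.log (1 - lam * z₀ * t))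
        ((1 - lam * z₀ * t)⁻¹ * (-(lam * z₀))) t := by
      simpa [Function.comp_def] using (Complex.hasDerivAt_log hslit).comp t hg
    have h2 : HasDerivAt (fun t : ℝ => (z₀ - K * z₀) * (t:ℂ)) (z₀ - K * z₀) t := by
      simpa using (Complex.ofRealCLM.hasDerivAt.const_mul (z₀ - K * z₀))
    have h3 := h2.sub (HasDerivAt.const_mul (K / lam) hlog)
    refine h3.congr_deriv ?_
    have hne' : 1 - z₀ * lam * (t:ℂ) ≠ 0 := by rwa [show z₀ * lam = lam * z₀ from mul_comm _ _]
    linear_combination (K * z₀ * (1 - lam * z₀ * (t:ℂ))⁻¹) * inv_mul_cancel₀ hlam0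
  have hcont : IntervalIntegrable
      (fun t : ℝ => (z₀ - K * z₀) + K * z₀ * (1 - lam * z₀ * t)⁻¹) MeasureTheory.volume 0 1 := by
    apply ContinuousOn.intervalIntegrable
    apply ContinuousOn.add continuousOn_const
    apply ContinuousOn.mul continuousOn_const
    apply ContinuousOn.inv₀
    · exact continuousOn_const.sub (continuousOn_const.mul Complex.continuous_ofReal.continuousOn)
    · intro t ht; exact (h1t t ht).1
  rw [intervalIntegral.integral_eq_sub_of_hasDerivAt hFderiv hcont]
  simp only [hF_def, Complex.ofReal_one, Complex.ofReal_zero, mul_one, mul_zero, sub_zero]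
  rw [Complex.log_one]
  ring
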